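/- For every integer n ≥ 3, the number of minimal forts of the star graph S_n on n vertices equals C(n−1, 2). -/

import Mathlib

/-- A fort of a simple graph: a nonempty set of vertices such that every vertex
outside the set has either zero or at least two neighbors in the set. -/
def IsFort {V : Type*} (G : SimpleGraph V) (F : Set V) : Prop :=
  F.Nonempty ∧ ∀ v ∉ F, (G.neighborSet v ∩ F).ncard ≠ 1

/-- A minimal fort: a fort no proper subset of which is a fort. -/
def IsMinimalFort {V : Type*} (G : SimpleGraph V) (F : Set V) : Prop :=
  IsFort G F ∧ ∀ F' : Set V, F' ⊂ F → ¬ IsFort G F'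

/-- The number of minimal forts of a graph. -/
noncomputable def numMinForts {V : Type*} (G : SimpleGraph V) : ℕ :=
  {F : Set V | IsMinimalFort G F}.ncard

/-- The star graph on `n` vertices: the vertex `0` (the center) is adjacent to all
other vertices, and there are no other edges. -/
def starGraph (n : ℕ) : SimpleGraph (Fin n) :=
  SimpleGraph.fromRel (fun i _ => (i : ℕ) = 0)

section Aux
variable {n : ℕ} [NeZero n]

lemma star_adj (a b : Fin n) :
    (starGraph n).Adj a b ↔ a ≠ b ∧ (a = 0 ∨ b = 0) := by
  have hz : ∀ c : Fin n, (c : ℕ) = 0 ↔ c = 0 := fun c => Fin.val_eq_zero_iff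
  simp only [starGraph, SimpleGraph.fromRel_adj, hz]

lemma star_nbhd_leaf (v : Fin n) (hv : v ≠ 0) :
    (starGraph n).neighborSet v = {0} := by
  ext w
  simp only [SimpleGraph.mem_neighborSet, star_adj, Set.mem_singleton_iff]
  constructor
  · rintro ⟨hne, h | h⟩
    · exact absurd h hv
    · exact h
  · rintro rfl
    exact ⟨hv, Or.inr rfl⟩

lemma star_nbhd_center :
    (starGraph n).neighborSet (0 : Fin n) = {(0 : Fin n)}ᶜ := by
  ext w
  simp only [SimpleGraph.mem_neighborSet, star_adj, Set.mem_compl_iff,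
    Set.mem_singleton_iff]
  constructor
  · rintro ⟨hne, -⟩; exact fun h => hne h.symm
  · exact fun h => ⟨fun h' => h h'.symm, Or.inl trivial⟩


lemma star_fort_iff (F : Set (Fin n)) :
    IsFort (starGraph n) F ↔ ((0 : Fin n) ∉ F ∧ 2 ≤ F.ncard) ∨ F = Set.univ := by
  constructor
  · rintro ⟨hne, hF⟩
    by_cases h0 : (0 : Fin n) ∈ F
    · right
      ext v; simp only [Set.mem_univ, iff_true]
      by_contra hv
      have hv0 : v ≠ 0 := fun h => hv (h ▸ h0)
      have hcontra := hF v hv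
      rw [star_nbhd_leaf v hv0] at hcontra
      have heq : ({(0 : Fin n)} ∩ F : Set (Fin n)) = {0} := by
        ext x
        simp only [Set.mem_inter_iff, Set.mem_singleton_iff, and_iff_left_iff_imp]
        rintro rfl; exact h0
      rw [heq, Set.ncard_singleton] at hcontra
      exact hcontra rfl
    · left
      refine ⟨h0, ?_⟩
      have hcontra := hF 0 h0
      rw [star_nbhd_center] at hcontra
      have heq : ({(0 : Fin n)}ᶜ ∩ F : Set (Fin n)) = F := by
        apply Set.inter_eq_self_of_subset_right
        intro x hx; simp only [Set.mem_compl_iff, Set.mem_singleton_iff]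
        rintro rfl; exact h0 hx
      rw [heq] at hcontra
      have h1 : 0 < F.ncard := (Set.ncard_pos (Set.toFinite F)).mpr hne
      omega
  · rintro (⟨h0, h2⟩ | rfl)
    · refine ⟨Set.nonempty_of_ncard_ne_zero (by omega), fun v hv => ?_⟩
      by_cases hv0 : v = 0
      · subst hv0
        rw [star_nbhd_center]
        have heq : ({(0 : Fin n)}ᶜ ∩ F : Set (Fin n)) = F := by
          apply Set.inter_eq_self_of_subset_right
          intro x hx; simp only [Set.mem_compl_iff, Set.mem_singleton_iff]
          rintro rfl; exact h0 hx
        rw [heq]; omega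
      · rw [star_nbhd_leaf v hv0]
        have heq : ({(0 : Fin n)} ∩ F : Set (Fin n)) = ∅ := by
          ext x; simp only [Set.mem_inter_iff, Set.mem_singleton_iff,
            Set.mem_empty_iff_false, iff_false]
          rintro ⟨rfl, hx⟩; exact h0 hx
        simp [heq]
    · exact ⟨⟨0, trivial⟩, fun v hv => absurd trivial hv⟩

end Aux

lemma star_minfort_iff {n : ℕ} (hn : 3 ≤ n) (F : Set (Fin n)) :
    haveI : NeZero n := ⟨by omega⟩
    IsMinimalFort (starGraph n) F ↔ ((0 : Fin n) ∉ F ∧ F.ncard = 2) := by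
  haveI : NeZero n := ⟨by omega⟩
  constructor
  · rintro ⟨hF, hmin⟩
    rcases (star_fort_iff F).mp hF with ⟨h0, h2⟩ | rfl
    · refine ⟨h0, ?_⟩
      by_contra hne
      have h3 : 3 ≤ F.ncard := by omega
      obtain ⟨a, ha, b, hb, hab⟩ :=
        (Set.one_lt_ncard (Set.toFinite F)).mp (by omega : 1 < F.ncard)
      have hsub : ({a, b} : Set (Fin n)) ⊆ F := by
        intro x hx; rcases hx with rfl | rfl <;> assumption
      have hcard : ({a, b} : Set (Fin n)).ncard = 2 := Set.ncard_pair hab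
      have hss : ({a, b} : Set (Fin n)) ⊂ F :=
        hsub.ssubset_of_ne (fun h => by rw [← h, hcard] at h3; omega)
      exact hmin _ hss ((star_fort_iff _).mpr (Or.inl
        ⟨fun hm => h0 (hsub hm), by omega⟩))
    · exfalso
      set a : Fin n := ⟨1, by omega⟩ with ha_def
      set b : Fin n := ⟨2, by omega⟩ with hb_def
      have hab : a ≠ b := by simp [ha_def, hb_def, Fin.ext_iff]
      have ha0 : a ≠ 0 := by
        simp [ha_def, Fin.ext_iff, Fin.val_zero]
      have hb0 : b ≠ 0 := by
        simp [hb_def, Fin.ext_iff, Fin.val_zero]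
      have hss : ({a, b} : Set (Fin n)) ⊂ Set.univ := by
        refine (Set.subset_univ _).ssubset_of_ne ?_
        intro h
        have h0m : (0 : Fin n) ∈ ({a, b} : Set (Fin n)) := h ▸ trivial
        rcases h0m with h' | h'
        · exact ha0 h'.symm
        · exact hb0 h'.symm
      refine hmin _ hss ((star_fort_iff _).mpr (Or.inl ⟨?_, ?_⟩))
      · rintro (h | h)
        · exact ha0 h.symm
        · exact hb0 h.symm
      · rw [Set.ncard_pair hab]
  · rintro ⟨h0, h2⟩
    refine ⟨(star_fort_iff F).mpr (Or.inl ⟨h0, by omega⟩), fun F' hss hF' => ?_⟩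
    have hlt : F'.ncard < 2 := by
      have := Set.ncard_lt_ncard hss (Set.toFinite F)
      omega
    rcases (star_fort_iff F').mp hF' with ⟨-, h2'⟩ | rfl
    · omega
    · exact absurd (hss.subset (Set.mem_univ 0)) h0

theorem stmt_3 (n : ℕ) (hn : 3 ≤ n) :
    numMinForts (starGraph n) = (n - 1).choose 2 := by
  haveI : NeZero n := ⟨by omega⟩
  have hset : {F : Set (Fin n) | IsMinimalFort (starGraph n) F}
      = (fun s : Finset (Fin n) => (s : Set (Fin n))) ''
        ↑(((Finset.univ : Finset (Fin n)).erase 0).powersetCard 2) := by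
    ext F
    simp only [Set.mem_setOf_eq, star_minfort_iff hn, Set.mem_image, Finset.mem_coe,
      Finset.mem_powersetCard]
    constructor
    · rintro ⟨h0, h2⟩
      have hfin := Set.toFinite F
      refine ⟨hfin.toFinset, ⟨?_, ?_⟩, by simp⟩
      · intro x hx
        simp only [Set.Finite.mem_toFinset] at hx
        simp only [Finset.mem_erase, Finset.mem_univ, and_true]
        rintro rfl; exact h0 hx
      · rw [← Set.ncard_eq_toFinset_card F hfin]
        exact h2
    · rintro ⟨s, ⟨hs, hcard⟩, rfl⟩
      refine ⟨fun h => ?_, ?_⟩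
      · have := hs (by exact_mod_cast h)
        simp at this
      · rw [Set.ncard_coe_finset]; exact hcard
  rw [numMinForts, hset,
    Set.ncard_image_of_injective _ Finset.coe_injective, Set.ncard_coe_finset,
    Finset.card_powersetCard, Finset.card_erase_of_mem (Finset.mem_univ _),
    Finset.card_univ, Fintype.card_fin]
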